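/- Consider the 12 configurations (C, O) with C ∈ {none, object, session, explicit} and O ∈ {trivial, object, all}, with readability ⪯ evaluated under causal arbitration, and let ≈ be mutual readability (A ≈ B iff A ⪯ B and B ⪯ A). Then the quotient of the 12 configurations by ≈ has exactly 8 classes: at O = trivial the four closure scopes are pairwise inequivalent (4 classes); at O = object, (none, object) ≈ (object, object) while (session, object) and (explicit, object) are distinct from these and from each other (3 classes); at O = all, all four configurations (C, all) are equivalent (1 class). -/

import Mathlib

/-- Closure scopes. -/
inductive CScope
  | none | object | session | explicit
deriving DecidableEq

/-- Ordering scopes. -/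
inductive OScope
  | trivial | object | all
deriving DecidableEq

/-- A finite labeled causal DAG: a finite type of messages with an irreflexive
acyclic edge relation and object/session labels. -/
structure LDag where
  M : Type
  [fin : Fintype M]
  O0 : Type
  S0 : Type
  E : M → M → Prop
  irr : Irreflexive E
  acyc : Irreflexive (Relation.TransGen E)
  obj : M → O0
  sess : M → S0

/-- The closure filters `deps_C`. -/
def LDag.deps (G : LDag) : CScope → G.M → Set G.M
  | .none, _ => ∅
  | .object, m => {m' | G.E m' m ∧ G.obj m' = G.obj m}
  | .session, m => {m' | G.E m' m ∧ G.sess m' = G.sess m}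
  | .explicit, m => {m' | G.E m' m}

/-- Same-class relation of an ordering scope. -/
def LDag.sameClass (G : LDag) : OScope → G.M → G.M → Prop
  | .trivial, a, b => a = b
  | .object, a, b => G.obj a = G.obj b
  | .all, _, _ => True

/-- `V` is closed under the filter `deps_C`. -/
def LDag.closedUnder (G : LDag) (C : CScope) (V : Set G.M) : Prop :=
  ∀ m ∈ V, G.deps C m ⊆ V

/-- `V` is a per-class prefix for the ordering scope `O` w.r.t. `prec`. -/
def LDag.isPrefix (G : LDag) (O : OScope) (prec : G.M → G.M → Prop) (V : Set G.M) : Prop :=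
  ∀ m ∈ V, ∀ m', G.sameClass O m' m → prec m' m → m' ∈ V

/-- A cut `V` is admissible under the configuration `(C, O)` w.r.t. `(E, prec)`. -/
def LDag.admissible (G : LDag) (prec : G.M → G.M → Prop) (C : CScope) (O : OScope)
    (V : Set G.M) : Prop :=
  G.closedUnder C V ∧ G.isPrefix O prec V

/-- `prec` refines the causal order (causal arbitration). -/
def LDag.refines (G : LDag) (prec : G.M → G.M → Prop) : Prop :=
  ∀ m' m, G.E m' m → prec m' m

/-- A configuration is a pair of a closure scope and an ordering scope. -/
abbrev Config := CScope × OScope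

/-- Readability under causal arbitration: every `A`-admissible cut is
`B`-admissible, on every finite labeled causal DAG and every strict linear
order refining the causal edges. -/
def Readable (A B : Config) : Prop :=
  ∀ G : LDag, ∀ prec : G.M → G.M → Prop,
    IsStrictTotalOrder G.M prec → G.refines prec →
    ∀ V : Set G.M, G.admissible prec A.1 A.2 V → G.admissible prec B.1 B.2 V

/-- The chain `trivial < object < all` on ordering scopes, as a rank. -/
def OScope.rank : OScope → ℕ
  | .trivial => 0
  | .object => 1
  | .all => 2

/-- The κ map: the closure entailed by an ordering scope. -/
def kappa : OScope → CScope
  | .trivial => .none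
  | .object => .object
  | .all => .explicit

/-- Mutual readability under causal arbitration. -/
def MutuallyReadable (A B : Config) : Prop :=
  Readable A B ∧ Readable B A

theorem readable_refl (A : Config) : Readable A A :=
  fun _ _ _ _ _ h => h

theorem readable_trans {A B C : Config} (h₁ : Readable A B) (h₂ : Readable B C) :
    Readable A C :=
  fun G prec hs hr V hV => h₂ G prec hs hr V (h₁ G prec hs hr V hV)

/-- Mutual readability is an equivalence on the 12 configurations. -/
def readEqv : Setoid Config :=
  ⟨MutuallyReadable,
    ⟨fun A => ⟨readable_refl A, readable_refl A⟩,
     fun h => ⟨h.2, h.1⟩,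
     fun h₁ h₂ => ⟨readable_trans h₁.1 h₂.1, readable_trans h₂.2 h₁.2⟩⟩⟩

/-! ### Auxiliary test gadget -/

abbrev tE (e : Bool) (a b : Bool) : Prop := (e && !a && b) = true

abbrev tPrec (a b : Bool) : Prop := (!a && b) = true

def tG (e o s : Bool) : LDag where
  M := Bool
  O0 := Bool
  S0 := Bool
  E := tE e
  irr := by intro a h; cases a <;> simp [tE] at h
  acyc := by
    intro a h
    have key : ∀ x y, Relation.TransGen (tE e) x y → x = false ∧ y = true := by
      intro x y hxy
      induction hxy with
      | single h => cases x <;> cases y <;> simp_all [tE]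
      | tail _ h ih =>
          refine ⟨ih.1, ?_⟩
          rename_i b c _
          cases c <;> simp_all [tE]
    have := key a a h
    simp_all
  obj := fun m => o || m
  sess := fun m => s || m

lemma tPrec_sto : IsStrictTotalOrder Bool tPrec :=
  { trichotomous := by decide
    irrefl := by decide
    trans := by decide }

lemma tG_refines (e o s : Bool) : (tG e o s).refines tPrec := by
  intro a b h
  cases a <;> cases b <;> simp_all [tG, tE, tPrec, LDag.refines]

def tV : Set Bool := {b | b = true}

/-- reject table -/
def Rej (C : CScope) (O : OScope) (e o s : Bool) : Bool :=
  (match C with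
   | .none => false | .object => e && o | .session => e && s | .explicit => e) ||
  (match O with | .trivial => false | .object => o | .all => true)

lemma adm_iff (e o s : Bool) (C : CScope) (O : OScope) :
    (tG e o s).admissible tPrec C O tV ↔ Rej C O e o s = false := by
  cases C <;> cases O <;> cases e <;> cases o <;> cases s <;> dsimp only [tG] <;>
    simp [LDag.admissible, LDag.closedUnder, LDag.isPrefix, LDag.deps, LDag.sameClass,
      tG, tV, tE, tPrec, Rej, Set.subset_def, Set.mem_setOf_eq]
lemma sep (e o s : Bool) (A B : Config) (h1 : Rej A.1 A.2 e o s = false)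
    (h2 : Rej B.1 B.2 e o s = true) : ¬ Readable A B := by
  intro hR
  have := hR (tG e o s) tPrec tPrec_sto (tG_refines e o s) tV ((adm_iff e o s A.1 A.2).mpr h1)
  rw [adm_iff] at this
  rw [h2] at this
  exact Bool.true_eq_false.mp this

lemma lemA : Readable (CScope.none, OScope.object) (CScope.object, OScope.object) := by
  rintro G prec _ hr V ⟨_, hp⟩
  refine ⟨?_, hp⟩
  rintro m hm x ⟨hE, hobj⟩
  exact hp m hm x hobj (hr x m hE)

lemma lemA' : Readable (CScope.object, OScope.object) (CScope.none, OScope.object) := by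
  rintro G prec _ hr V ⟨_, hp⟩
  exact ⟨fun m _ x hx => absurd hx (Set.notMem_empty x), hp⟩

lemma lemB (C C' : CScope) : Readable (C, OScope.all) (C', OScope.all) := by
  rintro G prec _ hr V ⟨_, hp⟩
  refine ⟨?_, hp⟩
  intro m hm x hx
  have hE : G.E x m := by
    cases C' with
    | none => exact absurd hx (Set.notMem_empty x)
    | object => exact hx.1
    | session => exact hx.1
    | explicit => exact hx
  exact hp m hm x trivial (hr x m hE)

def classIdx : Config → Fin 8
  | (.none, .trivial) => 0
  | (.object, .trivial) => 1
  | (.session, .trivial) => 2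
  | (.explicit, .trivial) => 3
  | (.none, .object) => 4
  | (.object, .object) => 4
  | (.session, .object) => 5
  | (.explicit, .object) => 6
  | (_, .all) => 7

lemma tableEq_of_mr {a b : Config} (h : MutuallyReadable a b) :
    ∀ e o s, Rej a.1 a.2 e o s = Rej b.1 b.2 e o s := by
  intro e o s
  by_cases hA : Rej a.1 a.2 e o s = false
  · have := h.1 (tG e o s) tPrec tPrec_sto (tG_refines e o s) tV ((adm_iff e o s a.1 a.2).mpr hA)
    rw [adm_iff] at this
    rw [hA, this]
  · by_cases hB : Rej b.1 b.2 e o s = false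
    · have := h.2 (tG e o s) tPrec tPrec_sto (tG_refines e o s) tV ((adm_iff e o s b.1 b.2).mpr hB)
      rw [adm_iff] at this
      exact absurd this hA
    · rw [Bool.not_eq_false] at hA hB
      rw [hA, hB]

lemma wd {a b : Config} (h : MutuallyReadable a b) : classIdx a = classIdx b := by
  have htab := tableEq_of_mr h
  obtain ⟨a1, a2⟩ := a
  obtain ⟨b1, b2⟩ := b
  revert htab
  cases a1 <;> cases a2 <;> cases b1 <;> cases b2 <;> decide

lemma rd_of_idx : ∀ a b : Config, classIdx a = classIdx b → Readable a b := by
  rintro ⟨a1, a2⟩ ⟨b1, b2⟩ h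
  cases a1 <;> cases a2 <;> cases b1 <;> cases b2 <;>
    first
      | exact readable_refl _
      | exact lemA
      | exact lemA'
      | exact lemB _ _
      | exact absurd h (by decide)

lemma card8 : Nat.card (Quotient readEqv) = 8 := by
  have hbij : Function.Bijective (Quotient.lift classIdx (fun _ _ h => wd h) :
      Quotient readEqv → Fin 8) := by
    constructor
    · refine Quotient.ind₂ (fun a b h => ?_)
      exact Quotient.sound ⟨rd_of_idx a b h, rd_of_idx b a h.symm⟩
    · intro i
      fin_cases i
      · exact ⟨Quotient.mk readEqv (.none, .trivial), rfl⟩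
      · exact ⟨Quotient.mk readEqv (.object, .trivial), rfl⟩
      · exact ⟨Quotient.mk readEqv (.session, .trivial), rfl⟩
      · exact ⟨Quotient.mk readEqv (.explicit, .trivial), rfl⟩
      · exact ⟨Quotient.mk readEqv (.none, .object), rfl⟩
      · exact ⟨Quotient.mk readEqv (.session, .object), rfl⟩
      · exact ⟨Quotient.mk readEqv (.explicit, .object), rfl⟩
      · exact ⟨Quotient.mk readEqv (.none, .all), rfl⟩
  rw [Nat.card_eq_of_bijective _ hbij]
  simp
/-- **The 12 configurations collapse to exactly 8 classes.**
The quotient of the 12 configurations by mutual readability has exactly 8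
classes: 4 at `O = trivial` (the four closure scopes pairwise inequivalent),
3 at `O = object` (`(none, object) ≈ (object, object)`, with `(session, object)`
and `(explicit, object)` distinct from these and from each other), and
1 at `O = all` (all four closure scopes equivalent). -/
theorem twelve_configs_eight_classes :
    Nat.card (Quotient readEqv) = 8 ∧
    (∀ C C' : CScope,
      MutuallyReadable (C, OScope.trivial) (C', OScope.trivial) → C = C') ∧
    MutuallyReadable (CScope.none, OScope.object) (CScope.object, OScope.object) ∧
    (¬ MutuallyReadable (CScope.session, OScope.object) (CScope.none, OScope.object)) ∧
    (¬ MutuallyReadable (CScope.explicit, OScope.object) (CScope.none, OScope.object)) ∧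
    (¬ MutuallyReadable (CScope.session, OScope.object) (CScope.explicit, OScope.object)) ∧
    (∀ C C' : CScope, MutuallyReadable (C, OScope.all) (C', OScope.all)) := by
  refine ⟨card8, ?_, ⟨lemA, lemA'⟩, ?_, ?_, ?_, fun C C' => ⟨lemB C C', lemB C' C⟩⟩
  · intro C C' h
    have hi := wd h
    revert hi
    cases C <;> cases C' <;> decide
  · exact fun h => sep true false true (.none, .object) (.session, .object) rfl rfl h.2
  · exact fun h => sep true false false (.none, .object) (.explicit, .object) rfl rfl h.2
  · exact fun h => sep true false false (.session, .object) (.explicit, .object) rfl rfl h.1
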